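/- arXiv:2301.12675 — 2 statements merged into one kernel-verified Lean document; each statement's English description precedes it below -/
import Mathlib

section
/- Let H be a symmetric matrix, E a matrix, β > 0, and suppose x̃ ∈ [l,u] satisfies, with multipliers α, γ ≥ 0: g + H(x̃ − x_k) + βEᵀE(x̃ − x_k) + w − α + γ = 0, αᵀ(x̃ − l) = 0, γᵀ(u − x̃) = 0, where x_k ∈ [l,u] and g + w is the gradient at x_k of the function φ(x) = gᵀ(x − x_k) + (1/2)(x−x_k)ᵀH(x−x_k) + (β/2)‖Ex + v‖² (so w = βEᵀ(Ex_k + v)). Then for d = x̃ − x_k one has ∇φ(x_k)ᵀd ≤ −dᵀ(H + βEᵀE)d. -/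
open Matrix

/-- descent of the x-subproblem objective
`φ(x) = gᵀ(x−x_k) + (1/2)(x−x_k)ᵀH(x−x_k) + (β/2)‖Ex+v‖²` along `d = x̃ − x_k`:
`∇φ(x_k)ᵀd ≤ −dᵀ(H + βEᵀE)d`. -/
theorem x_subproblem_descent
    (n m : ℕ) (β : ℝ) (hβ : 0 < β)
    (H : Matrix (Fin n) (Fin n) ℝ) (hH : H.IsSymm)
    (E : Matrix (Fin m) (Fin n) ℝ) (v : Fin m → ℝ)
    (l u g xk xt d α γ : Fin n → ℝ)
    (hxk : ∀ i, l i ≤ xk i ∧ xk i ≤ u i)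
    (hxt : ∀ i, l i ≤ xt i ∧ xt i ≤ u i)
    (hα : ∀ i, 0 ≤ α i) (hγ : ∀ i, 0 ≤ γ i)
    (hKKT : g + H.mulVec (xt - xk) + β • (Eᵀ * E).mulVec (xt - xk)
        + β • Eᵀ.mulVec (E.mulVec xk + v) - α + γ = 0)
    (hcompα : α ⬝ᵥ (xt - l) = 0) (hcompγ : γ ⬝ᵥ (u - xt) = 0)
    (hd : d = xt - xk) :
    (g + β • Eᵀ.mulVec (E.mulVec xk + v)) ⬝ᵥ d
      ≤ -(d ⬝ᵥ (H + β • (Eᵀ * E)).mulVec d) := by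
  subst hd
  have hgrad : g + β • Eᵀ.mulVec (E.mulVec xk + v)
      = α - γ - (H + β • (Eᵀ * E)).mulVec (xt - xk) := by
    funext i
    have h0 := congrFun hKKT i
    simp only [add_mulVec, smul_mulVec, Pi.add_apply, Pi.sub_apply,
      Pi.smul_apply, Pi.zero_apply, smul_eq_mul] at h0 ⊢
    linarith
  rw [hgrad, sub_dotProduct, sub_dotProduct]
  have hα1 : α ⬝ᵥ (xt - xk) ≤ 0 := by
    have : α ⬝ᵥ (xt - xk) = α ⬝ᵥ (xt - l) + α ⬝ᵥ (l - xk) := by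
      rw [← dotProduct_add]; congr 1; funext i; simp [Pi.sub_apply]
    rw [this, hcompα, zero_add]
    apply Finset.sum_nonpos
    intro i _
    exact mul_nonpos_of_nonneg_of_nonpos (hα i) (by simp [(hxk i).1])
  have hγ1 : 0 ≤ γ ⬝ᵥ (xt - xk) := by
    have : γ ⬝ᵥ (xt - xk) = -(γ ⬝ᵥ (u - xt)) + γ ⬝ᵥ (u - xk) := by
      rw [← dotProduct_neg, ← dotProduct_add]; congr 1; funext i
      simp [Pi.sub_apply]
    rw [this, hcompγ, neg_zero, zero_add]
    apply Finset.sum_nonneg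
    intro i _
    exact mul_nonneg (hγ i) (by simp [(hxk i).2])
  have hsym : (H + β • (Eᵀ * E)).mulVec (xt - xk) ⬝ᵥ (xt - xk)
      = (xt - xk) ⬝ᵥ (H + β • (Eᵀ * E)).mulVec (xt - xk) :=
    dotProduct_comm _ _
  linarith [hsym]
end

section
/- Lower bound on step sizes along a nonvanishing subsequence: let L be C¹ with uniformly continuous gradient on a compact set containing {u_k + t d_k : t ∈ [0,1], k ∈ K}, suppose ∇L(u_k)ᵀd_k ≤ −d_kᵀM_k d_k with d_kᵀM_kd_k ≥ η‖d_k‖², ‖d_k‖ ≥ ε > 0 and ‖d_k‖ ≤ D for all k ∈ K. Then there exists t* > 0 such that the Armijo condition L(u_k + t d_k) ≤ L(u_k) − tρ d_kᵀM_kd_k holds for all t ∈ (0, t*] and all k ∈ K; consequently, the Armijo step sizes t_k are bounded below by σt* > 0 on K and ‖t_k d_k‖ ≥ σ t* ε. -/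
open Matrix

/-- uniform lower bound on Armijo step sizes along a subsequence on which
the directions neither vanish nor blow up. There is `t* > 0` such that the Armijo
condition holds for all `t ∈ (0, t*]` and all indices `k ∈ K`; consequently any power
`σ^j` whose predecessor `σ^(j-1)` fails the Armijo test satisfies `σ^j > σ t*`, and
`‖σ^j d_k‖ ≥ σ t* ε`. -/
theorem armijo_steps_uniformly_bounded_below
    (n : ℕ) (L : (Fin n → ℝ) → ℝ) (hL : ContDiff ℝ 1 L)
    (K : Set ℕ) (u d : ℕ → Fin n → ℝ) (M : ℕ → Matrix (Fin n) (Fin n) ℝ)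
    (ρ σ η ε D : ℝ) (hρ0 : 0 < ρ) (hρ1 : ρ < 1) (hσ0 : 0 < σ) (hσ1 : σ < 1)
    (hη : 0 < η) (hε : 0 < ε) (hD : 0 < D)
    (hMsym : ∀ k, (M k).IsSymm)
    (hMη : ∀ k ∈ K, η * (d k ⬝ᵥ d k) ≤ d k ⬝ᵥ (M k).mulVec (d k))
    (hdesc : ∀ k ∈ K, fderiv ℝ L (u k) (d k) ≤ -(d k ⬝ᵥ (M k).mulVec (d k)))
    (hlow : ∀ k ∈ K, ε ≤ Real.sqrt (d k ⬝ᵥ d k))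
    (hup : ∀ k ∈ K, Real.sqrt (d k ⬝ᵥ d k) ≤ D)
    (S : Set (Fin n → ℝ)) (hS : IsCompact S)
    (hseg : ∀ k ∈ K, ∀ t : ℝ, 0 ≤ t → t ≤ 1 → u k + t • d k ∈ S) :
    ∃ tstar > 0,
      (∀ k ∈ K, ∀ t : ℝ, 0 < t → t ≤ tstar →
        L (u k + t • d k) ≤ L (u k) - t * ρ * (d k ⬝ᵥ (M k).mulVec (d k))) ∧
      (∀ k ∈ K, ∀ j : ℕ, 1 ≤ j → σ ^ (j - 1) ≤ 1 →
        ¬ (L (u k + σ ^ (j - 1) • d k)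
            ≤ L (u k) - σ ^ (j - 1) * ρ * (d k ⬝ᵥ (M k).mulVec (d k))) →
        σ * tstar < σ ^ j ∧ σ * tstar * ε ≤ σ ^ j * Real.sqrt (d k ⬝ᵥ d k)) := by
  classical
  set g := fderiv ℝ L with hg
  have hgc : Continuous g := (hL.continuous_fderiv one_ne_zero)
  have hdiff : Differentiable ℝ L := hL.differentiable one_ne_zero
  have huc : UniformContinuousOn g S := hS.uniformContinuousOn_of_continuous hgc.continuousOn
  set c : ℝ := (1 - ρ) * η * ε ^ 2 / D with hc
  have hc0 : 0 < c := by
    have h1ρ : 0 < 1 - ρ := by linarith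
    rw [hc]; positivity
  rw [Metric.uniformContinuousOn_iff] at huc
  obtain ⟨δ, hδ0, hδ⟩ := huc c hc0
  have htstar0 : (0:ℝ) < min 1 (δ / (2 * D)) := lt_min one_pos (by positivity)
  refine ⟨min 1 (δ / (2 * D)), htstar0, ?_⟩
  have main : ∀ k ∈ K, ∀ t : ℝ, 0 < t → t ≤ min 1 (δ / (2 * D)) →
      L (u k + t • d k) ≤ L (u k) - t * ρ * (d k ⬝ᵥ (M k).mulVec (d k)) := by
    intro k hk t ht0 htm
    have ht1 : t ≤ 1 := le_trans htm (min_le_left _ _)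
    have htδ : t ≤ δ / (2 * D) := le_trans htm (min_le_right _ _)
    set A : ℝ := d k ⬝ᵥ (M k).mulVec (d k) with hAdef
    have hdd0 : (0:ℝ) ≤ d k ⬝ᵥ d k := by
      unfold dotProduct; exact Finset.sum_nonneg fun i _ => mul_self_nonneg _
    have hnormd : ‖d k‖ ≤ Real.sqrt (d k ⬝ᵥ d k) := by
      rw [pi_norm_le_iff_of_nonneg (Real.sqrt_nonneg _)]
      intro i
      rw [Real.norm_eq_abs, ← Real.sqrt_sq_eq_abs]
      apply Real.sqrt_le_sqrt
      calc d k i ^ 2 = d k i * d k i := by ring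
        _ ≤ _ := Finset.single_le_sum (f := fun i => d k i * d k i)
            (fun i _ => mul_self_nonneg _) (Finset.mem_univ i)
    have hndD : ‖d k‖ ≤ D := hnormd.trans (hup k hk)
    have hmem : ∀ s : ℝ, 0 ≤ s → s ≤ t → u k + s • d k ∈ S ∧ dist (u k + s • d k) (u k) < δ := by
      intro s hs0 hst
      refine ⟨hseg k hk s hs0 (hst.trans ht1), ?_⟩
      have hde : dist (u k + s • d k) (u k) = ‖s • d k‖ := by
        rw [dist_eq_norm]; congr 1; abel
      rw [hde, norm_smul, Real.norm_eq_abs, abs_of_nonneg hs0]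
      calc s * ‖d k‖ ≤ (δ / (2 * D)) * D :=
            mul_le_mul (hst.trans htδ) hndD (norm_nonneg _) (by positivity)
        _ = δ / 2 := by field_simp
        _ < δ := by linarith
    have huS : u k ∈ S := by
      have := (hmem 0 le_rfl ht0.le).1; simpa using this
    set seg : Set (Fin n → ℝ) := segment ℝ (u k) (u k + t • d k) with hsegdef
    have hsub : ∀ x ∈ seg, ∃ s : ℝ, 0 ≤ s ∧ s ≤ t ∧ x = u k + s • d k := by
      intro x hx
      rw [hsegdef, segment_eq_image'] at hx
      obtain ⟨r, ⟨hr0, hr1⟩, hxe⟩ := hx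
      refine ⟨r * t, by positivity, by nlinarith, ?_⟩
      rw [← hxe]
      show u k + r • (u k + t • d k - u k) = u k + (r * t) • d k
      rw [add_sub_cancel_left, smul_smul]
    have bound : ∀ x ∈ seg, ‖g x - g (u k)‖ ≤ c := by
      intro x hx
      obtain ⟨s, hs0, hst, rfl⟩ := hsub x hx
      obtain ⟨hxS, hxd⟩ := hmem s hs0 hst
      have hlt := hδ _ hxS _ huS hxd
      rw [dist_eq_norm] at hlt
      exact hlt.le
    have hfd : ∀ x ∈ seg, HasFDerivWithinAt L (g x) seg x :=
      fun x _ => (hdiff x).hasFDerivAt.hasFDerivWithinAt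
    have hxs : u k ∈ seg := left_mem_segment ℝ _ _
    have hys : u k + t • d k ∈ seg := right_mem_segment ℝ _ _
    have key := Convex.norm_image_sub_le_of_norm_hasFDerivWithin_le' hfd bound
      (convex_segment _ _) hxs hys
    have hyx : (u k + t • d k) - u k = t • d k := by abel
    rw [hyx] at key
    have hlin : (g (u k)) (t • d k) = t * (g (u k)) (d k) := by
      rw [(g (u k)).map_smul, smul_eq_mul]
    have hnorm_td : ‖t • d k‖ ≤ t * D := by
      rw [norm_smul, Real.norm_eq_abs, abs_of_nonneg ht0.le]
      exact mul_le_mul_of_nonneg_left hndD ht0.le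
    have key2 : L (u k + t • d k) - L (u k) ≤ t * (g (u k)) (d k) + c * (t * D) := by
      have h1 := (abs_le.mp (by rwa [Real.norm_eq_abs] at key)).2
      have h2 : c * ‖t • d k‖ ≤ c * (t * D) := mul_le_mul_of_nonneg_left hnorm_td hc0.le
      rw [hlin] at h1
      linarith
    have hεd : ε ^ 2 ≤ d k ⬝ᵥ d k := by
      have h := hlow k hk
      nlinarith [Real.sq_sqrt hdd0, Real.sqrt_nonneg (d k ⬝ᵥ d k)]
    have hA : η * ε ^ 2 ≤ A :=
      le_trans (mul_le_mul_of_nonneg_left hεd hη.le) (hMη k hk)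
    have h1 : t * (g (u k)) (d k) ≤ t * (-A) :=
      mul_le_mul_of_nonneg_left (hdesc k hk) ht0.le
    have h5 : c * (t * D) = t * ((1 - ρ) * η * ε ^ 2) := by
      rw [hc]; field_simp
    have h3 : t * ((1 - ρ) * η * ε ^ 2) ≤ t * ((1 - ρ) * A) := by
      apply mul_le_mul_of_nonneg_left _ ht0.le
      have h : (1 - ρ) * (η * ε ^ 2) ≤ (1 - ρ) * A :=
        mul_le_mul_of_nonneg_left hA (by linarith)
      calc (1 - ρ) * η * ε ^ 2 = (1 - ρ) * (η * ε ^ 2) := by ring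
        _ ≤ (1 - ρ) * A := h
    have h4 : t * (-A) + t * ((1 - ρ) * A) = -(t * ρ * A) := by ring
    linarith [key2, h1, h3, h4, h5]
  refine ⟨main, ?_⟩
  intro k hk j hj hσj hfail
  have hpow0 : 0 < σ ^ (j - 1) := pow_pos hσ0 _
  have hgt : min 1 (δ / (2 * D)) < σ ^ (j - 1) := by
    by_contra h
    push_neg at h
    exact hfail (main k hk _ hpow0 h)
  have hσjeq : σ ^ j = σ * σ ^ (j - 1) := by
    conv_lhs => rw [show j = 1 + (j - 1) by omega]
    rw [pow_add, pow_one]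
  constructor
  · rw [hσjeq]
    exact mul_lt_mul_of_pos_left hgt hσ0
  · have h1 : σ * min 1 (δ / (2 * D)) ≤ σ ^ j := by
      rw [hσjeq]; exact mul_le_mul_of_nonneg_left hgt.le hσ0.le
    have h2 : ε ≤ Real.sqrt (d k ⬝ᵥ d k) := hlow k hk
    exact mul_le_mul h1 h2 hε.le (by positivity)
end
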